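/- For every ε > 0 there exists δ > 0 such that for any Euclidean triangle with all inner angles at least ε and any conformal factor u on its vertices with ‖u‖_∞ ≤ δ, the conformally scaled lengths l̃_{pq} = e^{(u_p+u_q)/2} d_{pq} satisfy the triangle inequalities and each new inner angle differs from the corresponding old one by at most ε/2. -/
import Mathlib


open Real

/-- Conformally scaled edge length: `l_{pq} = exp((u p + u q)/2) * d p q`. -/
noncomputable def clen (d : Fin 3 → Fin 3 → ℝ) (u : Fin 3 → ℝ) (p q : Fin 3) : ℝ :=
  Real.exp ((u p + u q) / 2) * d p q

/-- Inner angle at vertex `i` of the triangle with vertices `i j k`, edge lengths given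
by the conformal metric `clen d u`, via the law of cosines. -/
noncomputable def ang (d : Fin 3 → Fin 3 → ℝ) (u : Fin 3 → ℝ) (i j k : Fin 3) : ℝ :=
  Real.arccos ((clen d u i j ^ 2 + clen d u i k ^ 2 - clen d u j k ^ 2) /
    (2 * clen d u i j * clen d u i k))

noncomputable def cot (x : ℝ) : ℝ := Real.cos x / Real.sin x

private lemma sin_ge_aux {a t : ℝ} (h0 : 0 ≤ a) (h1 : a ≤ t) (h2 : t ≤ π - a) :
    Real.sin a ≤ Real.sin t := by
  rcases le_or_gt t (π / 2) with h | h
  · exact Real.sin_le_sin_of_le_of_le_pi_div_two (by linarith [Real.pi_pos]) h h1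
  · have ha2 : a ≤ π / 2 := by linarith
    rw [← Real.sin_pi_sub t]
    exact Real.sin_le_sin_of_le_of_le_pi_div_two (by linarith [Real.pi_pos]) (by linarith)
      (by linarith)

private lemma arccos_anti {x y : ℝ} (h : x ≤ y) : Real.arccos y ≤ Real.arccos x :=
  sub_le_sub_left (Real.monotone_arcsin h) _

private lemma exp_close {s δ m : ℝ} (hδ : 0 ≤ δ) (hs : |s| ≤ 2 * δ)
    (he : Real.exp (2 * δ) = 1 + m) : |Real.exp s - 1| ≤ m := by
  obtain ⟨hs1, hs2⟩ := abs_le.mp hs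
  have hm : 0 ≤ m := by
    have := Real.one_le_exp (by linarith : (0:ℝ) ≤ 2 * δ)
    linarith [he ▸ this]
  have hup : Real.exp s ≤ 1 + m := by
    rw [← he]; exact Real.exp_le_exp.2 hs2
  have hdn : Real.exp (-(2 * δ)) ≤ Real.exp s := Real.exp_le_exp.2 (by linarith)
  have hprod : Real.exp (-(2 * δ)) * (1 + m) = 1 := by
    rw [← he, ← Real.exp_add]; simp
  have h1m : 0 < 1 + m := by linarith
  have hlow : 1 - m ≤ Real.exp s := by
    nlinarith [hprod, h1m, hm, hdn, sq_nonneg m, Real.exp_pos (-(2 * δ))]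
  rw [abs_le]; constructor <;> linarith

private lemma aux_tri_upper {x y z : ℝ} (t1 : x < y + z) (t2 : y < x + z) :
    x ^ 2 + y ^ 2 - z ^ 2 ≤ 2 * x * y := by nlinarith

private lemma aux_tri_lower {x y z : ℝ} (hx : 0 < x) (hy : 0 < y) (hz : 0 < z)
    (t3 : z < x + y) : -(2 * x * y) ≤ x ^ 2 + y ^ 2 - z ^ 2 := by nlinarith

private lemma aux_side {x y z c : ℝ} (hz : 0 < z)
    (A : x ^ 2 + z ^ 2 - y ^ 2 ≤ 2 * x * z * c)
    (B : y ^ 2 + z ^ 2 - x ^ 2 ≤ 2 * y * z * c) : z ≤ (x + y) * c := by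
  nlinarith

private lemma aux_ratio {x y z c : ℝ} (hc : 0 < c) (hc1 : c < 1)
    (A : x ≤ (y + z) * c) (B : z ≤ (x + y) * c) : x * (1 - c) ≤ c * y := by
  nlinarith [mul_le_mul_of_nonneg_right B hc.le, (show (0:ℝ) < 1 + c by linarith)]

private lemma aux_ec {m c e : ℝ} (he : e = 1 + m) (h : m * (2 * c) ≤ 1 - c)
    (hc : 0 < c) (hc1 : c < 1) : e * c < 1 := by nlinarith

private lemma aux_pc {P N c : ℝ} (hP : 0 < P) (hNP : N * P = 1)
    (h : P * P * c < 1) : P * c < N := by nlinarith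

private lemma aux_scale {P N c S : ℝ} (hS : 0 < S) (h : P * c < N) :
    P * (S * c) < N * S := by nlinarith

private lemma aux_sum_sq {x y z M : ℝ} (hx : 0 < x) (hy : 0 < y) (hz : 0 < z)
    (hM : 1 ≤ M) (h1 : x ≤ M * y) (h2 : y ≤ M * x) (h3 : z ≤ x + y) :
    x ^ 2 + y ^ 2 + z ^ 2 ≤ 6 * M * (x * y) := by
  nlinarith [mul_le_mul_of_nonneg_right h1 hx.le, mul_le_mul_of_nonneg_right h2 hy.le,
    mul_self_le_mul_self hz.le h3, mul_pos hx hy]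

private lemma aux_q0low {x y z c : ℝ} (hx : 0 < x) (hy : 0 < y) (hz : 0 < z)
    (hc : 0 < c) (hc1 : c < 1) (h : z ≤ (x + y) * c) :
    (1 - 2 * c ^ 2) * (2 * x * y) ≤ x ^ 2 + y ^ 2 - z ^ 2 := by
  nlinarith [mul_self_le_mul_self hz.le h,
    mul_nonneg (by nlinarith : (0:ℝ) ≤ 1 - c ^ 2) (sq_nonneg (x - y))]

private lemma aux_cle {x y z c : ℝ} (hxy : 0 < x + y) (hc1 : c ≤ 1)
    (h : z ≤ (x + y) * c) : z ≤ x + y := by nlinarith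

private lemma aux_negone {c Q : ℝ} (h : 1 - 2 * c ^ 2 ≤ Q) (hc : 0 < c) (hc1 : c < 1) :
    -1 ≤ Q := by nlinarith

private lemma aux_close {Q Q0 η A B : ℝ} (h : |Q - Q0| ≤ η)
    (hA : η ≤ Q0 - A) (hB : η ≤ B - Q0) : A ≤ Q ∧ Q ≤ B := by
  obtain ⟨h1, h2⟩ := abs_le.mp h
  constructor <;> linarith

private lemma aux_gap {s3 s4 st : ℝ} (h4 : 0 < s4) (h : s3 ≤ st) :
    2 * s3 * s4 ≤ 2 * st * s4 := by nlinarith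

theorem angle_stability_under_small_conformal_factor :
    ∀ ε > (0 : ℝ), ∃ δ > (0 : ℝ),
      ∀ d : Fin 3 → Fin 3 → ℝ, (∀ p q, p ≠ q → 0 < d p q) → (∀ p q, d p q = d q p) →
      (∀ i j k : Fin 3, i ≠ j → i ≠ k → j ≠ k →
          d i j < d i k + d j k) →
      (∀ i j k : Fin 3, i ≠ j → i ≠ k → j ≠ k → ε ≤ ang d 0 i j k) →
      ∀ u : Fin 3 → ℝ, (∀ p, |u p| ≤ δ) →
        (∀ i j k : Fin 3, i ≠ j → i ≠ k → j ≠ k →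
            clen d u i j < clen d u i k + clen d u j k) ∧
        (∀ i j k : Fin 3, i ≠ j → i ≠ k → j ≠ k →
            |ang d u i j k - ang d 0 i j k| ≤ ε / 2) := by
  intro ε hε
  have hπ : (0:ℝ) < π := Real.pi_pos
  obtain ⟨ε₀, hε₀pos, hε₀ε, hε₀π⟩ : ∃ ε₀, 0 < ε₀ ∧ ε₀ ≤ ε ∧ ε₀ ≤ π / 3 :=
    ⟨min ε (π / 3), lt_min hε (by positivity), min_le_left _ _, min_le_right _ _⟩
  obtain ⟨c, hchalf, hc1, hcdef⟩ : ∃ c, 1 / 2 ≤ c ∧ c < 1 ∧ c = Real.cos ε₀ := by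
    refine ⟨Real.cos ε₀, ?_, ?_, rfl⟩
    · have h1 : Real.cos (π / 3) ≤ Real.cos ε₀ :=
        Real.cos_le_cos_of_nonneg_of_le_pi hε₀pos.le (by linarith) hε₀π
      rwa [Real.cos_pi_div_three] at h1
    · have h1 : Real.cos ε₀ < Real.cos 0 :=
        Real.cos_lt_cos_of_nonneg_of_le_pi le_rfl (by linarith) hε₀pos
      rwa [Real.cos_zero] at h1
  have hcpos : 0 < c := by linarith
  have hs34 : 0 < Real.sin (3 * ε₀ / 4) :=
    Real.sin_pos_of_pos_of_lt_pi (by linarith) (by linarith)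
  have hs14 : 0 < Real.sin (ε₀ / 4) :=
    Real.sin_pos_of_pos_of_lt_pi (by linarith) (by linarith)
  obtain ⟨η, hηpos, hηdef⟩ :
      ∃ η, 0 < η ∧ η = 2 * Real.sin (3 * ε₀ / 4) * Real.sin (ε₀ / 4) :=
    ⟨_, mul_pos (mul_pos two_pos hs34) hs14, rfl⟩
  obtain ⟨M, hM1, hMdef⟩ : ∃ M, 1 ≤ M ∧ M = c / (1 - c) :=
    ⟨_, (one_le_div (by linarith)).2 (by linarith), rfl⟩
  have hMpos : 0 < M := by linarith
  obtain ⟨m, hmpos, hm1, hm2⟩ : ∃ m, 0 < m ∧ m * (3 * M) ≤ η ∧ m * (2 * c) ≤ 1 - c := by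
    refine ⟨min (η / (3 * M)) ((1 - c) / (2 * c)),
      lt_min (div_pos hηpos (by linarith)) (div_pos (by linarith) (by linarith)), ?_, ?_⟩
    · have h := min_le_left (η / (3 * M)) ((1 - c) / (2 * c))
      calc min (η / (3 * M)) ((1 - c) / (2 * c)) * (3 * M)
          ≤ η / (3 * M) * (3 * M) := mul_le_mul_of_nonneg_right h (by linarith)
        _ = η := div_mul_cancel₀ _ (by linarith)
    · have h := min_le_right (η / (3 * M)) ((1 - c) / (2 * c))
      calc min (η / (3 * M)) ((1 - c) / (2 * c)) * (2 * c)
          ≤ (1 - c) / (2 * c) * (2 * c) := mul_le_mul_of_nonneg_right h (by linarith)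
        _ = 1 - c := div_mul_cancel₀ _ (by linarith)
  obtain ⟨δ, hδpos, he2δ⟩ : ∃ δ, 0 < δ ∧ Real.exp (2 * δ) = 1 + m := by
    refine ⟨Real.log (1 + m) / 2, ?_, ?_⟩
    · have := Real.log_pos (by linarith : (1:ℝ) < 1 + m)
      positivity
    · rw [show 2 * (Real.log (1 + m) / 2) = Real.log (1 + m) by ring]
      exact Real.exp_log (by linarith)
  refine ⟨δ, hδpos, ?_⟩
  intro d hd hsym h3 h4 u hu
  -- Step A: per-vertex cosine bound at ε₀
  have L1 : ∀ i j k : Fin 3, i ≠ j → i ≠ k → j ≠ k →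
      d i j ^ 2 + d i k ^ 2 - d j k ^ 2 ≤ 2 * d i j * d i k * c := by
    intro i j k hij hik hjk
    have hx := hd i j hij
    have hy := hd i k hik
    have hz := hd j k hjk
    have t1 : d i j < d i k + d j k := h3 i j k hij hik hjk
    have t2 : d i k < d i j + d j k := by
      have h := h3 i k j hik hij (Ne.symm hjk)
      rwa [hsym k j] at h
    have t3 : d j k < d i j + d i k := by
      have h := h3 j k i hjk (Ne.symm hij) (Ne.symm hik)
      rwa [hsym j i, hsym k i] at h
    set Q0 : ℝ := (d i j ^ 2 + d i k ^ 2 - d j k ^ 2) / (2 * d i j * d i k) with hQ0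
    have hden : (0:ℝ) < 2 * d i j * d i k := by positivity
    have hQ0u : Q0 ≤ 1 := by
      rw [hQ0, div_le_one hden]
      linarith [aux_tri_upper t1 t2]
    have hQ0l : -1 ≤ Q0 := by
      rw [hQ0, le_div_iff₀ hden]
      linarith [aux_tri_lower hx hy hz t3]
    have hang : ε₀ ≤ Real.arccos Q0 := by
      have h := h4 i j k hij hik hjk
      have e : ang d 0 i j k = Real.arccos Q0 := by
        simp [ang, clen, hQ0]
      rw [e] at h
      linarith
    have hQc : Q0 ≤ c := by
      rw [hcdef]
      have h5 : Real.cos (Real.arccos Q0) ≤ Real.cos ε₀ :=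
        Real.cos_le_cos_of_nonneg_of_le_pi hε₀pos.le (Real.arccos_le_pi _) hang
      rwa [Real.cos_arccos hQ0l hQ0u] at h5
    have := (div_le_iff₀ hden).mp hQc
    linarith [this]
  -- Step B: quantitative side bound
  have L2 : ∀ i j k : Fin 3, i ≠ j → i ≠ k → j ≠ k →
      d j k ≤ (d i j + d i k) * c := by
    intro i j k hij hik hjk
    have A := L1 j i k (Ne.symm hij) hjk hik
    have B := L1 k i j (Ne.symm hik) (Ne.symm hjk) hij
    rw [hsym j i] at A
    rw [hsym k i, hsym k j] at B
    exact aux_side (hd j k hjk) A B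
  -- Step C: side-ratio bound
  have L3 : ∀ i j k : Fin 3, i ≠ j → i ≠ k → j ≠ k →
      d i j ≤ M * d i k := by
    intro i j k hij hik hjk
    have A := L2 k i j (Ne.symm hik) (Ne.symm hjk) hij
    rw [hsym k i, hsym k j] at A
    have B := L2 i j k hij hik hjk
    have h1c : (0:ℝ) < 1 - c := by linarith
    rw [hMdef, div_mul_eq_mul_div, le_div_iff₀ h1c]
    exact aux_ratio hcpos hc1 A B
  have hexpabs : ∀ s : ℝ, |s| ≤ 2 * δ → |Real.exp s - 1| ≤ m := fun s hs =>
    exp_close hδpos.le hs he2δ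
  have hub : ∀ p : Fin 3, u p ≤ δ := fun p => (abs_le.mp (hu p)).2
  have hlb : ∀ p : Fin 3, -δ ≤ u p := fun p => (abs_le.mp (hu p)).1
  have hec : Real.exp (2 * δ) * c < 1 := aux_ec he2δ hm2 hcpos hc1
  constructor
  · -- triangle inequalities for the scaled lengths
    intro i j k hij hik hjk
    have hx := hd i j hij
    have hy := hd i k hik
    have hz := hd j k hjk
    have key : d i j ≤ (d i k + d j k) * c := by
      have A := L2 k i j (Ne.symm hik) (Ne.symm hjk) hij
      rwa [hsym k i, hsym k j] at A
    have e1 : clen d u i j ≤ Real.exp δ * d i j := by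
      unfold clen
      exact mul_le_mul_of_nonneg_right
        (Real.exp_le_exp.2 (by linarith [hub i, hub j])) hx.le
    have e2 : Real.exp (-δ) * d i k ≤ clen d u i k := by
      unfold clen
      exact mul_le_mul_of_nonneg_right
        (Real.exp_le_exp.2 (by linarith [hlb i, hlb k])) hy.le
    have e3 : Real.exp (-δ) * d j k ≤ clen d u j k := by
      unfold clen
      exact mul_le_mul_of_nonneg_right
        (Real.exp_le_exp.2 (by linarith [hlb j, hlb k])) hz.le
    have hsum : (0:ℝ) < d i k + d j k := by linarith
    have hid : Real.exp δ * Real.exp δ = Real.exp (2 * δ) := by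
      rw [← Real.exp_add]; congr 1; ring
    have hid2 : Real.exp (-δ) * Real.exp δ = 1 := by
      rw [← Real.exp_add]; simp
    have hkey : Real.exp δ * c < Real.exp (-δ) :=
      aux_pc (Real.exp_pos δ) hid2 (by rw [hid]; exact hec)
    have hmain : Real.exp δ * d i j < Real.exp (-δ) * (d i k + d j k) := by
      have h1 : Real.exp δ * d i j ≤ Real.exp δ * ((d i k + d j k) * c) :=
        mul_le_mul_of_nonneg_left key (Real.exp_pos δ).le
      have h2 : Real.exp δ * ((d i k + d j k) * c) < Real.exp (-δ) * (d i k + d j k) :=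
        aux_scale hsum hkey
      linarith
    calc clen d u i j ≤ Real.exp δ * d i j := e1
      _ < Real.exp (-δ) * (d i k + d j k) := hmain
      _ = Real.exp (-δ) * d i k + Real.exp (-δ) * d j k := by ring
      _ ≤ clen d u i k + clen d u j k := add_le_add e2 e3
  · -- angle stability
    intro i j k hij hik hjk
    have hx := hd i j hij
    have hy := hd i k hik
    have hz := hd j k hjk
    set x : ℝ := d i j with hxdef
    set y : ℝ := d i k with hydef
    set z : ℝ := d j k with hzdef
    set p : ℝ := Real.exp ((u i + u j) / 2) with hpdef
    set q : ℝ := Real.exp ((u i + u k) / 2) with hqdef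
    set r : ℝ := Real.exp ((u j + u k) / 2) with hrdef
    set t₁ : ℝ := Real.exp ((u j - u k) / 2) with ht₁def
    set t₂ : ℝ := Real.exp ((u k - u j) / 2) with ht₂def
    set t₃ : ℝ := Real.exp ((u j + u k) / 2 - u i) with ht₃def
    have hppos : 0 < p := Real.exp_pos _
    have hqpos : 0 < q := Real.exp_pos _
    have hA : clen d u i j = p * x := rfl
    have hB : clen d u i k = q * y := rfl
    have hC : clen d u j k = r * z := rfl
    set Q : ℝ := (clen d u i j ^ 2 + clen d u i k ^ 2 - clen d u j k ^ 2) /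
      (2 * clen d u i j * clen d u i k) with hQdef
    set Q0 : ℝ := (x ^ 2 + y ^ 2 - z ^ 2) / (2 * x * y) with hQ0def
    have hangu : ang d u i j k = Real.arccos Q := rfl
    have hang0 : ang d 0 i j k = Real.arccos Q0 := by
      simp [ang, clen, hQ0def, hxdef, hydef, hzdef]
    clear_value x y z p q r t₁ t₂ t₃ Q Q0
    -- exp identities
    have hp2 : p ^ 2 = t₁ * (p * q) := by
      rw [hpdef, hqdef, ht₁def]
      simp only [sq, ← Real.exp_add, Real.exp_eq_exp]
      ring
    have hq2 : q ^ 2 = t₂ * (p * q) := by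
      rw [hpdef, hqdef, ht₂def]
      simp only [sq, ← Real.exp_add, Real.exp_eq_exp]
      ring
    have hr2 : r ^ 2 = t₃ * (p * q) := by
      rw [hpdef, hqdef, hrdef, ht₃def]
      simp only [sq, ← Real.exp_add, Real.exp_eq_exp]
      ring
    have hQalt : Q = (t₁ * x ^ 2 + t₂ * y ^ 2 - t₃ * z ^ 2) / (2 * x * y) := by
      rw [hQdef, hA, hB, hC]
      rw [div_eq_div_iff (by positivity) (by positivity)]
      linear_combination (2 * x * y * x ^ 2) * hp2 + (2 * x * y * y ^ 2) * hq2
        - (2 * x * y * z ^ 2) * hr2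
    have hQid : Q - Q0 = ((t₁ - 1) * x ^ 2 + (t₂ - 1) * y ^ 2 - (t₃ - 1) * z ^ 2) /
        (2 * x * y) := by
      rw [hQalt, hQ0def]
      field_simp
      ring
    -- bounds on the multiplicative factors
    have hui := abs_le.mp (hu i)
    have huj := abs_le.mp (hu j)
    have huk := abs_le.mp (hu k)
    have ht₁b : |t₁ - 1| ≤ m := by
      rw [ht₁def]
      apply hexpabs
      rw [abs_le]
      constructor <;> [linarith [huj.1, huk.2, hδpos.le]; linarith [huj.2, huk.1, hδpos.le]]
    have ht₂b : |t₂ - 1| ≤ m := by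
      rw [ht₂def]
      apply hexpabs
      rw [abs_le]
      constructor <;> [linarith [huk.1, huj.2, hδpos.le]; linarith [huk.2, huj.1, hδpos.le]]
    have ht₃b : |t₃ - 1| ≤ m := by
      rw [ht₃def]
      apply hexpabs
      rw [abs_le]
      constructor <;> [linarith [huj.1, huk.1, hui.2]; linarith [huj.2, huk.2, hui.1]]
    -- side bounds instances
    have hxMy : x ≤ M * y := by rw [hxdef, hydef]; exact L3 i j k hij hik hjk
    have hyMx : y ≤ M * x := by rw [hxdef, hydef]; exact L3 i k j hik hij (Ne.symm hjk)
    have hzxy : z ≤ (x + y) * c := by rw [hxdef, hydef, hzdef]; exact L2 i j k hij hik hjk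
    have hzxy' : z ≤ x + y := aux_cle (by linarith) hc1.le hzxy
    -- |Q - Q0| ≤ η
    have hsum6 : x ^ 2 + y ^ 2 + z ^ 2 ≤ 6 * M * (x * y) :=
      aux_sum_sq hx hy hz hM1 hxMy hyMx hzxy'
    have hNabs : |(t₁ - 1) * x ^ 2 + (t₂ - 1) * y ^ 2 - (t₃ - 1) * z ^ 2| ≤
        m * (x ^ 2 + y ^ 2 + z ^ 2) := by
      have h1 : |(t₁ - 1) * x ^ 2| ≤ m * x ^ 2 := by
        rw [abs_mul, abs_of_nonneg (by positivity : (0:ℝ) ≤ x ^ 2)]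
        exact mul_le_mul_of_nonneg_right ht₁b (by positivity)
      have h2 : |(t₂ - 1) * y ^ 2| ≤ m * y ^ 2 := by
        rw [abs_mul, abs_of_nonneg (by positivity : (0:ℝ) ≤ y ^ 2)]
        exact mul_le_mul_of_nonneg_right ht₂b (by positivity)
      have h3' : |(t₃ - 1) * z ^ 2| ≤ m * z ^ 2 := by
        rw [abs_mul, abs_of_nonneg (by positivity : (0:ℝ) ≤ z ^ 2)]
        exact mul_le_mul_of_nonneg_right ht₃b (by positivity)
      have e1 := abs_le.mp h1
      have e2 := abs_le.mp h2
      have e3 := abs_le.mp h3'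
      rw [abs_le]
      constructor <;> linarith [e1.1, e1.2, e2.1, e2.2, e3.1, e3.2]
    have habsQ : |Q - Q0| ≤ η := by
      rw [hQid, abs_div, abs_of_pos (by positivity : (0:ℝ) < 2 * x * y)]
      rw [div_le_iff₀ (by positivity : (0:ℝ) < 2 * x * y)]
      calc |(t₁ - 1) * x ^ 2 + (t₂ - 1) * y ^ 2 - (t₃ - 1) * z ^ 2|
          ≤ m * (x ^ 2 + y ^ 2 + z ^ 2) := hNabs
        _ ≤ m * (6 * M * (x * y)) := mul_le_mul_of_nonneg_left hsum6 hmpos.le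
        _ = m * (3 * M) * (2 * x * y) := by ring
        _ ≤ η * (2 * x * y) := mul_le_mul_of_nonneg_right hm1 (by positivity)
    -- bounds on Q0
    have hden : (0:ℝ) < 2 * x * y := by positivity
    have hQ0c : Q0 ≤ c := by
      rw [hQ0def, div_le_iff₀ hden, hxdef, hydef, hzdef]
      have := L1 i j k hij hik hjk
      linarith
    have hQ0low : 1 - 2 * c ^ 2 ≤ Q0 := by
      rw [hQ0def, le_div_iff₀ hden]
      exact aux_q0low hx hy hz hcpos hc1 hzxy
    have hQ0u1 : Q0 ≤ 1 := by linarith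
    have hQ0l1 : -1 ≤ Q0 := aux_negone hQ0low hcpos hc1
    set θ₀ : ℝ := Real.arccos Q0 with hθ₀def
    have hcosθ₀ : Real.cos θ₀ = Q0 := by
      rw [hθ₀def]; exact Real.cos_arccos hQ0l1 hQ0u1
    have hθ₀lb : ε₀ ≤ θ₀ := by
      have h := h4 i j k hij hik hjk
      rw [hang0] at h
      rw [hθ₀def]
      linarith
    have hθ₀ub : θ₀ ≤ π - 2 * ε₀ := by
      have hco : Real.cos (π - 2 * ε₀) ≤ Q0 := by
        rw [Real.cos_pi_sub, Real.cos_two_mul]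
        simp only [← hcdef]
        linarith
      have h := arccos_anti hco
      rw [Real.arccos_cos (by linarith) (by linarith)] at h
      rw [hθ₀def]
      exact h
    clear_value θ₀
    -- gap inequalities
    have hg1 : η ≤ Real.cos θ₀ - Real.cos (θ₀ + ε₀ / 2) := by
      have hid : Real.cos θ₀ - Real.cos (θ₀ + ε₀ / 2) =
          2 * Real.sin (θ₀ + ε₀ / 4) * Real.sin (ε₀ / 4) := by
        rw [Real.cos_sub_cos,
          show (θ₀ + (θ₀ + ε₀ / 2)) / 2 = θ₀ + ε₀ / 4 by ring,
          show (θ₀ - (θ₀ + ε₀ / 2)) / 2 = -(ε₀ / 4) by ring, Real.sin_neg]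
        ring
      rw [hid, hηdef]
      have hsin : Real.sin (3 * ε₀ / 4) ≤ Real.sin (θ₀ + ε₀ / 4) :=
        sin_ge_aux (by linarith) (by linarith) (by linarith)
      exact aux_gap hs14 hsin
    have hg2 : η ≤ Real.cos (θ₀ - ε₀ / 2) - Real.cos θ₀ := by
      have hid : Real.cos (θ₀ - ε₀ / 2) - Real.cos θ₀ =
          2 * Real.sin (θ₀ - ε₀ / 4) * Real.sin (ε₀ / 4) := by
        rw [Real.cos_sub_cos,
          show (θ₀ - ε₀ / 2 + θ₀) / 2 = θ₀ - ε₀ / 4 by ring,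
          show (θ₀ - ε₀ / 2 - θ₀) / 2 = -(ε₀ / 4) by ring, Real.sin_neg]
        ring
      rw [hid, hηdef]
      have hsin : Real.sin (3 * ε₀ / 4) ≤ Real.sin (θ₀ - ε₀ / 4) :=
        sin_ge_aux (by linarith) (by linarith) (by linarith)
      exact aux_gap hs14 hsin
    rw [hcosθ₀] at hg1 hg2
    obtain ⟨hQdn, hQup⟩ := aux_close habsQ hg1 hg2
    clear hNabs habsQ hQid hQalt hp2 hq2 hr2 hA hB hC hQdef hQ0def ht₁b ht₂b ht₃b
      ht₁def ht₂def ht₃def hpdef hqdef hrdef hexpabs hub hlb hec he2δ hsum6 hg1 hg2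
      hui huj huk hu h4 h3 L1 L2 L3 hd hsym hxMy hyMx hzxy hzxy' hm1 hm2 hηdef hMdef
      hcdef hcosθ₀ hQ0c hQ0low hQ0u1 hQ0l1 hden hxdef hydef hzdef
    rw [hang0, hangu]
    clear hang0 hangu
    have hbb1 : 0 ≤ θ₀ - ε₀ / 2 := by linarith only [hθ₀lb, hε₀pos]
    have hbb2 : θ₀ + ε₀ / 2 ≤ π := by linarith only [hθ₀ub, hε₀pos]
    have hbb3 : 0 ≤ θ₀ + ε₀ / 2 := by linarith only [hθ₀lb, hε₀pos]
    have hbb4 : θ₀ - ε₀ / 2 ≤ π := by linarith only [hθ₀ub, hε₀pos]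
    have h1 : Real.arccos Q ≤ θ₀ + ε₀ / 2 := by
      have h := arccos_anti hQdn
      rwa [Real.arccos_cos hbb3 hbb2] at h
    have h2 : θ₀ - ε₀ / 2 ≤ Real.arccos Q := by
      have h := arccos_anti hQup
      rwa [Real.arccos_cos hbb1 hbb4] at h
    rw [abs_le]
    constructor <;> linarith only [h1, h2, hε₀ε, hε₀pos]
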